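/- Let γ > 1, ℓ := 2/(γ−1), and let k ∈ ℝ with k ≠ 0 and k² ≠ 1. Define g : (0,∞) → ℝ by g(w) := (1/k²)·w^{2(ℓ+1)} − (1/k² + 1/γ)·w^{ℓ+2} + 1/γ. Then: (i) g(1) = 0 and g(w) → +∞ as w → +∞; (ii) g attains its global minimum on (0,∞) uniquely at w̄ := ((γ + k²)/(γ + 1))^{1/ℓ}, and w̄ > 1 if k² > 1 while w̄ < 1 if k² < 1; (iii) g has exactly one zero w_k in (0,∞) different from 1, and w_k > 1 if k² > 1 while w_k < 1 if k² < 1. -/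

import Mathlib

open Set Filter Real

private lemma hasDerivAt_f (A B C p q : ℝ) {x : ℝ} (hx : 0 < x) :
    HasDerivAt (fun w : ℝ => A * w ^ p - B * w ^ q + C)
      (A * (p * x ^ (p - 1)) - B * (q * x ^ (q - 1))) x := by
  have h1 : HasDerivAt (fun w : ℝ => w ^ p) (p * x ^ (p - 1)) x :=
    Real.hasDerivAt_rpow_const (Or.inl hx.ne')
  have h2 : HasDerivAt (fun w : ℝ => w ^ q) (q * x ^ (q - 1)) x :=
    Real.hasDerivAt_rpow_const (Or.inl hx.ne')
  exact ((h1.const_mul A).sub (h2.const_mul B)).add_const C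

private lemma contOn_f (A B C p q : ℝ) {s : Set ℝ} (hs : ∀ x ∈ s, 0 < x) :
    ContinuousOn (fun w : ℝ => A * w ^ p - B * w ^ q + C) s :=
  fun x hx => ((hasDerivAt_f A B C p q (hs x hx)).continuousAt).continuousWithinAt

private lemma strictAntiOn_f (A B C p q w0 : ℝ) (hA : 0 < A) (hq : 0 < q)
    (hpq : q < p) (hw0 : 0 < w0) (hkey : A * p * w0 ^ (p - q) = B * q) :
    StrictAntiOn (fun w : ℝ => A * w ^ p - B * w ^ q + C) (Ioc 0 w0) := by
  apply strictAntiOn_of_deriv_neg (convex_Ioc 0 w0)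
    (contOn_f A B C p q (fun x hx => hx.1))
  intro x hx
  rw [interior_Ioc] at hx
  have hx0 : 0 < x := hx.1
  rw [(hasDerivAt_f A B C p q hx0).deriv]
  have h1 : x ^ (p - q) < w0 ^ (p - q) :=
    Real.rpow_lt_rpow hx0.le hx.2 (by linarith)
  have h2 : A * p * x ^ (p - q) < B * q := by
    calc A * p * x ^ (p - q) < A * p * w0 ^ (p - q) :=
          mul_lt_mul_of_pos_left h1 (by nlinarith)
      _ = B * q := hkey
  have hxq : (0:ℝ) < x ^ (q - 1) := Real.rpow_pos_of_pos hx0 _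
  have hsplit : x ^ (p - 1) = x ^ (q - 1) * x ^ (p - q) := by
    rw [← Real.rpow_add hx0]; ring_nf
  rw [hsplit]
  nlinarith [mul_pos (sub_pos.mpr h2) hxq]

private lemma strictMonoOn_f (A B C p q w0 : ℝ) (hA : 0 < A) (hq : 0 < q)
    (hpq : q < p) (hw0 : 0 < w0) (hkey : A * p * w0 ^ (p - q) = B * q) :
    StrictMonoOn (fun w : ℝ => A * w ^ p - B * w ^ q + C) (Ici w0) := by
  apply strictMonoOn_of_deriv_pos (convex_Ici w0)
    (contOn_f A B C p q (fun x hx => lt_of_lt_of_le hw0 hx))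
  intro x hx
  rw [interior_Ici] at hx
  have hx0 : 0 < x := lt_trans hw0 hx
  rw [(hasDerivAt_f A B C p q hx0).deriv]
  have h1 : w0 ^ (p - q) < x ^ (p - q) :=
    Real.rpow_lt_rpow hw0.le hx (by linarith)
  have h2 : B * q < A * p * x ^ (p - q) := by
    calc B * q = A * p * w0 ^ (p - q) := hkey.symm
      _ < A * p * x ^ (p - q) := mul_lt_mul_of_pos_left h1 (by nlinarith)
  have hxq : (0:ℝ) < x ^ (q - 1) := Real.rpow_pos_of_pos hx0 _
  have hsplit : x ^ (p - 1) = x ^ (q - 1) * x ^ (p - q) := by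
    rw [← Real.rpow_add hx0]; ring_nf
  rw [hsplit]
  nlinarith [mul_pos (sub_pos.mpr h2) hxq]

private lemma tendsto_f (A B C p q : ℝ) (hA : 0 < A) (hq : 0 < q) (hpq : q < p) :
    Tendsto (fun w : ℝ => A * w ^ p - B * w ^ q + C) atTop atTop := by
  have h1 : Tendsto (fun w : ℝ => w ^ (p - q)) atTop atTop :=
    tendsto_rpow_atTop (by linarith)
  have h2 : Tendsto (fun w : ℝ => A * w ^ (p - q) - B) atTop atTop := by
    have := tendsto_atTop_add_const_right atTop (-B) (h1.const_mul_atTop hA)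
    simpa [sub_eq_add_neg] using this
  have h3 : Tendsto (fun w : ℝ => w ^ q * (A * w ^ (p - q) - B) + C) atTop atTop :=
    tendsto_atTop_add_const_right _ C ((tendsto_rpow_atTop hq).atTop_mul_atTop₀ h2)
  refine h3.congr' ?_
  filter_upwards [eventually_gt_atTop (0:ℝ)] with w hw
  have e : w ^ p = w ^ q * w ^ (p - q) := by
    rw [← Real.rpow_add hw, show q + (p - q) = p from by ring]
  rw [e]; ring

open Set Filter Real

/-- properties of
`g(w) = (1/k²) w^{2(ℓ+1)} − (1/k² + 1/γ) w^{ℓ+2} + 1/γ` with `ℓ = 2/(γ−1)`,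
for `k ≠ 0`, `k² ≠ 1`: `g(1) = 0`, `g → +∞` at `+∞`, `g` has a unique global
minimum on `(0,∞)` at `w̄ = ((γ+k²)/(γ+1))^{1/ℓ}` (with `w̄ > 1` iff `k² > 1`),
and `g` has exactly one zero on `(0,∞)` different from `1`, lying on the same
side of `1` as `w̄`. -/
theorem stmt_19 (γ : ℝ) (hγ : 1 < γ) (k : ℝ) (hk : k ≠ 0) (hk1 : k ^ 2 ≠ 1) :
    let l : ℝ := 2 / (γ - 1)
    let g : ℝ → ℝ := fun w =>
      (1 / k ^ 2) * w ^ (2 * (l + 1)) - (1 / k ^ 2 + 1 / γ) * w ^ (l + 2) + 1 / γ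
    let wbar : ℝ := ((γ + k ^ 2) / (γ + 1)) ^ (1 / l)
    g 1 = 0 ∧
    Filter.Tendsto g Filter.atTop Filter.atTop ∧
    (∀ w : ℝ, 0 < w → w ≠ wbar → g wbar < g w) ∧
    (1 < k ^ 2 → 1 < wbar) ∧ (k ^ 2 < 1 → wbar < 1) ∧
    (∃! w : ℝ, 0 < w ∧ w ≠ 1 ∧ g w = 0) ∧
    (∀ w : ℝ, 0 < w → w ≠ 1 → g w = 0 →
      ((1 < k ^ 2 → 1 < w) ∧ (k ^ 2 < 1 → w < 1))) := by
  intro l g wbar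
  have hγ0 : 0 < γ := by linarith
  have hγ1 : (0:ℝ) < γ - 1 := by linarith
  have hl : 0 < l := by show (0:ℝ) < 2 / (γ - 1); positivity
  have hk2 : 0 < k ^ 2 := by positivity
  have hA : 0 < 1 / k ^ 2 := by positivity
  have hB : 0 < 1 / k ^ 2 + 1 / γ := by positivity
  have hq : 0 < l + 2 := by linarith
  have hpq : l + 2 < 2 * (l + 1) := by linarith
  have hbase : 0 < (γ + k ^ 2) / (γ + 1) := by positivity
  have hwbar0 : 0 < wbar := Real.rpow_pos_of_pos hbase _
  have hwl : wbar ^ l = (γ + k ^ 2) / (γ + 1) := by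
    show (((γ + k ^ 2) / (γ + 1)) ^ (1 / l)) ^ l = (γ + k ^ 2) / (γ + 1)
    rw [← Real.rpow_mul hbase.le, one_div, inv_mul_cancel₀ hl.ne', Real.rpow_one]
  have hkey : (1 / k ^ 2) * (2 * (l + 1)) * wbar ^ (2 * (l + 1) - (l + 2))
      = (1 / k ^ 2 + 1 / γ) * (l + 2) := by
    rw [show 2 * (l + 1) - (l + 2) = l from by ring, hwl]
    have hlval : l = 2 / (γ - 1) := rfl
    rw [hlval]
    field_simp
    ring
  have hanti : StrictAntiOn g (Ioc 0 wbar) :=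
    strictAntiOn_f _ _ _ _ _ _ hA hq hpq hwbar0 hkey
  have hmono : StrictMonoOn g (Ici wbar) :=
    strictMonoOn_f _ _ _ _ _ _ hA hq hpq hwbar0 hkey
  have htop : Tendsto g atTop atTop := tendsto_f _ _ _ _ _ hA hq hpq
  have g1 : g 1 = 0 := by
    show (1 / k ^ 2) * (1:ℝ) ^ (2 * (l + 1)) - (1 / k ^ 2 + 1 / γ) * (1:ℝ) ^ (l + 2) + 1 / γ = 0
    rw [Real.one_rpow, Real.one_rpow]; ring
  have hmin : ∀ w : ℝ, 0 < w → w ≠ wbar → g wbar < g w := by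
    intro w hw hne
    rcases lt_or_gt_of_ne hne with h | h
    · exact hanti ⟨hw, h.le⟩ ⟨hwbar0, le_refl _⟩ h
    · exact hmono (le_refl wbar) h.le h
  have hgt : 1 < k ^ 2 → 1 < wbar := by
    intro h
    have h1 : 1 < (γ + k ^ 2) / (γ + 1) := by
      rw [lt_div_iff₀ (by linarith)]; linarith
    exact (Real.one_lt_rpow_iff_of_pos hbase).mpr (Or.inl ⟨h1, by positivity⟩)
  have hlt : k ^ 2 < 1 → wbar < 1 := by
    intro h
    have h1 : (γ + k ^ 2) / (γ + 1) < 1 := by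
      rw [div_lt_one (by linarith)]; linarith
    exact Real.rpow_lt_one hbase.le h1 (by positivity)
  have hwbarne1 : wbar ≠ 1 := by
    rcases lt_or_gt_of_ne hk1 with h | h
    · exact (hlt h).ne
    · exact (hgt h).ne'
  have hgwbar : g wbar < 0 := by
    have := hmin 1 one_pos (Ne.symm hwbarne1)
    rwa [g1] at this
  -- a point M beyond wbar where g is positive
  obtain ⟨M, hM1, hM2⟩ : ∃ M, wbar < M ∧ 0 < g M := by
    have h := (htop.eventually (eventually_gt_atTop (0:ℝ))).and (eventually_gt_atTop wbar)
    rcases h.exists with ⟨M, h1, h2⟩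
    exact ⟨M, h2, h1⟩
  refine ⟨g1, htop, hmin, hgt, hlt, ?_, ?_⟩
  · -- existence and uniqueness of the second zero
    rcases lt_or_gt_of_ne hk1 with hcase | hcase
    · -- k² < 1 : wbar < 1, zero lies in (0, wbar)
      have hw1 : wbar < 1 := hlt hcase
      -- find ε ∈ (0, wbar) with g ε > 0
      set c : ℝ := (1 / γ) / (1 / k ^ 2 + 1 / γ) with hc
      have hc0 : 0 < c := by positivity
      set ε : ℝ := (1 / 2) * min wbar (c ^ (1 / (l + 2))) with hε
      have hcp : 0 < c ^ (1 / (l + 2)) := Real.rpow_pos_of_pos hc0 _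
      have hε0 : 0 < ε := by
        have := lt_min hwbar0 hcp
        positivity
      have hεwbar : ε < wbar := by
        have h1 : ε ≤ (1 / 2) * wbar := by
          have := min_le_left wbar (c ^ (1 / (l + 2)))
          rw [hε]; nlinarith
        linarith
      have hεc : ε < c ^ (1 / (l + 2)) := by
        have h1 : ε ≤ (1 / 2) * (c ^ (1 / (l + 2))) := by
          have := min_le_right wbar (c ^ (1 / (l + 2)))
          rw [hε]; nlinarith
        linarith
      have hεq : ε ^ (l + 2) < c := by
        have h1 : ε ^ (l + 2) < (c ^ (1 / (l + 2))) ^ (l + 2) :=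
          Real.rpow_lt_rpow hε0.le hεc hq
        rwa [← Real.rpow_mul hc0.le, one_div, inv_mul_cancel₀ hq.ne', Real.rpow_one] at h1
      have hgε : 0 < g ε := by
        show 0 < (1 / k ^ 2) * ε ^ (2 * (l + 1)) - (1 / k ^ 2 + 1 / γ) * ε ^ (l + 2) + 1 / γ
        have h1 : 0 < (1 / k ^ 2) * ε ^ (2 * (l + 1)) := by
          have := Real.rpow_pos_of_pos hε0 (2 * (l + 1)); positivity
        have h2 : (1 / k ^ 2 + 1 / γ) * ε ^ (l + 2) < 1 / γ := by
          have := (mul_lt_mul_of_pos_left hεq hB)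
          rwa [hc, mul_div_cancel₀ _ hB.ne'] at this
        linarith
      have hcont : ContinuousOn g (Icc ε wbar) :=
        contOn_f _ _ _ _ _ (fun x hx => lt_of_lt_of_le hε0 hx.1)
      obtain ⟨w, hwmem, hgw⟩ :=
        intermediate_value_Icc' hεwbar.le hcont ⟨hgwbar.le, hgε.le⟩
      have hww : w < wbar := lt_of_le_of_ne hwmem.2 (by
        rintro rfl; exact absurd hgw hgwbar.ne)
      have hw0 : 0 < w := lt_of_lt_of_le hε0 hwmem.1
      have hwne1 : w ≠ 1 := by linarith
      refine ⟨w, ⟨hw0, hwne1, hgw⟩, ?_⟩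
      rintro y ⟨hy0, hy1, hgy⟩
      by_cases hyw : wbar ≤ y
      · exact absurd (hmono.injOn hyw hw1.le (hgy.trans g1.symm)) hy1
      · exact hanti.injOn ⟨hy0, (not_le.mp hyw).le⟩ ⟨hw0, hww.le⟩ (hgy.trans hgw.symm)
    · -- 1 < k² : 1 < wbar, zero lies in (wbar, ∞)
      have hw1 : 1 < wbar := hgt hcase
      have hcont : ContinuousOn g (Icc wbar M) :=
        contOn_f _ _ _ _ _ (fun x hx => lt_of_lt_of_le hwbar0 hx.1)
      obtain ⟨w, hwmem, hgw⟩ :=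
        intermediate_value_Icc hM1.le hcont ⟨hgwbar.le, hM2.le⟩
      have hww : wbar < w := lt_of_le_of_ne hwmem.1 (by
        rintro rfl; exact absurd hgw hgwbar.ne)
      have hw0 : 0 < w := lt_trans hwbar0 hww
      have hwne1 : w ≠ 1 := by linarith
      refine ⟨w, ⟨hw0, hwne1, hgw⟩, ?_⟩
      rintro y ⟨hy0, hy1, hgy⟩
      by_cases hyw : y ≤ wbar
      · exact absurd (hanti.injOn ⟨hy0, hyw⟩ ⟨one_pos, hw1.le⟩ (hgy.trans g1.symm)) hy1
      · exact hmono.injOn (not_le.mp hyw).le hwmem.1 (hgy.trans hgw.symm)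
  · -- side of 1
    intro w hw0 hw1 hgw
    rcases lt_or_gt_of_ne hk1 with hcase | hcase
    · have hwb : wbar < 1 := hlt hcase
      have : w < wbar := by
        by_contra hyw
        exact hw1 (hmono.injOn (not_lt.mp hyw) hwb.le (hgw.trans g1.symm))
      exact ⟨fun h => absurd hcase (by linarith), fun _ => by linarith⟩
    · have hwb : 1 < wbar := hgt hcase
      have : wbar < w := by
        by_contra hyw
        exact hw1 (hanti.injOn ⟨hw0, not_lt.mp hyw⟩ ⟨one_pos, hwb.le⟩ (hgw.trans g1.symm))
      exact ⟨fun _ => by linarith, fun h => absurd hcase (by linarith)⟩
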